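/- Let k < 0, let a < b, and let g : [a,b] → ℝ be a C², positive-valued, distance-like function satisfying g''(t) ≤ √(−k)·(1 − (g'(t))²)·coth(√(−k)·g(t)) for all t ∈ [a,b]. Then for all t₁, t₂ with a ≤ t₁ < t₂ ≤ b and all u ∈ ℝ, v > 0 such that g_k(t₁; u, v) = g(t₁) and g_k(t₂; u, v) = g(t₂), one has g(t) ≥ g_k(t; u, v) for all t ∈ [t₁, t₂]. -/

import Mathlib

open Set

noncomputable def arcosh (x : ℝ) : ℝ := Real.log (x + Real.sqrt (x ^ 2 - 1))

noncomputable def coth (x : ℝ) : ℝ := Real.cosh x / Real.sinh x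

/-- The hyperbolic comparison function. -/
noncomputable def gHyp (k u v t : ℝ) : ℝ :=
  (1 / Real.sqrt (-k)) *
    arcosh (((u ^ 2 + v ^ 2) * Real.exp (-(Real.sqrt (-k)) * t) +
      Real.exp (Real.sqrt (-k) * t)) / (2 * v))

lemma cosh_arcosh {x : ℝ} (hx : 1 ≤ x) : Real.cosh (arcosh x) = x := by
  have h1 : (0:ℝ) ≤ x ^ 2 - 1 := by nlinarith
  have hr : Real.sqrt (x ^ 2 - 1) ^ 2 = x ^ 2 - 1 := Real.sq_sqrt h1
  have hrn : 0 ≤ Real.sqrt (x ^ 2 - 1) := Real.sqrt_nonneg _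
  have hy : 0 < x + Real.sqrt (x ^ 2 - 1) := by linarith
  have hmul : (x + Real.sqrt (x ^ 2 - 1)) * (x - Real.sqrt (x ^ 2 - 1)) = 1 := by nlinarith
  have hinv : (x + Real.sqrt (x ^ 2 - 1))⁻¹ = x - Real.sqrt (x ^ 2 - 1) :=
    inv_eq_of_mul_eq_one_right hmul
  rw [arcosh, Real.cosh_eq, Real.exp_log hy, Real.exp_neg, Real.exp_log hy, hinv]
  ring

lemma arcosh_nonneg {x : ℝ} (hx : 1 ≤ x) : 0 ≤ arcosh x :=
  Real.log_nonneg (by have := Real.sqrt_nonneg (x ^ 2 - 1); linarith)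

theorem hyp_comparison_of_diff_ineq_rev (k : ℝ) (hk : k < 0) (a b : ℝ) (hab : a < b) (g : ℝ → ℝ)
    (hC2 : ContDiffOn ℝ 2 g (Icc a b))
    (hpos : ∀ t ∈ Icc a b, 0 < g t)
    (hnonexp : ∀ t₁ ∈ Icc a b, ∀ t₂ ∈ Icc a b, |g t₁ - g t₂| ≤ |t₁ - t₂|)
    (hdistlike : ∀ t₁ ∈ Icc a b, ∀ t₂ ∈ Icc a b, |t₁ - t₂| ≤ g t₁ + g t₂)
    (hineq : ∀ t ∈ Icc a b, (derivWithin (derivWithin g (Icc a b)) (Icc a b)) t ≤ Real.sqrt (-k) * (1 - ((derivWithin g (Icc a b)) t) ^ 2) * coth (Real.sqrt (-k) * g t)) :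
    ∀ t₁ t₂, a ≤ t₁ → t₁ < t₂ → t₂ ≤ b → ∀ u v : ℝ, 0 < v →
      gHyp k u v t₁ = g t₁ → gHyp k u v t₂ = g t₂ →
      ∀ t ∈ Icc t₁ t₂, g t ≥ gHyp k u v t := by
  set s : ℝ := Real.sqrt (-k) with hs_def
  have hs : 0 < s := Real.sqrt_pos.2 (by linarith)
  set G1 : ℝ → ℝ := derivWithin g (Icc a b) with hG1_def
  set G2 : ℝ → ℝ := derivWithin G1 (Icc a b) with hG2_def
  have hUD : UniqueDiffOn ℝ (Icc a b) := uniqueDiffOn_Icc hab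
  have hG1C1 : ContDiffOn ℝ 1 G1 (Icc a b) := hC2.derivWithin hUD (by norm_num)
  -- derivatives at interior points
  have hgd : ∀ x ∈ Ioo a b, HasDerivAt g (G1 x) x := by
    intro x hx
    have hmem : Icc a b ∈ nhds x := Icc_mem_nhds hx.1 hx.2
    have hdg : DifferentiableAt ℝ g x :=
      ((hC2.differentiableOn (by norm_num)) x (Ioo_subset_Icc_self hx)).differentiableAt hmem
    rw [hG1_def, derivWithin_of_mem_nhds hmem]
    exact hdg.hasDerivAt
  have hG1d : ∀ x ∈ Ioo a b, HasDerivAt G1 (G2 x) x := by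
    intro x hx
    have hmem : Icc a b ∈ nhds x := Icc_mem_nhds hx.1 hx.2
    have hdg : DifferentiableAt ℝ G1 x :=
      ((hG1C1.differentiableOn (by norm_num)) x (Ioo_subset_Icc_self hx)).differentiableAt hmem
    rw [hG2_def, derivWithin_of_mem_nhds hmem]
    exact hdg.hasDerivAt
  intro t₁ t₂ ht₁ ht12 ht₂ u v hv hg1 hg2
  set ψ : ℝ → ℝ := fun t => ((u ^ 2 + v ^ 2) * Real.exp (-s * t) + Real.exp (s * t)) / (2 * v)
    with hψ_def
  set dψ : ℝ → ℝ := fun t =>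
      ((u ^ 2 + v ^ 2) * Real.exp (-s * t) * (-s) + Real.exp (s * t) * s) / (2 * v) with hdψ_def
  have hasψ : ∀ x : ℝ, HasDerivAt ψ (dψ x) x := by
    intro x
    have h1 : HasDerivAt (fun t : ℝ => -s * t) (-s) x := by
      simpa using (hasDerivAt_id x).const_mul (-s)
    have h2 : HasDerivAt (fun t : ℝ => s * t) s x := by
      simpa using (hasDerivAt_id x).const_mul s
    have := ((h1.exp.const_mul (u ^ 2 + v ^ 2)).add h2.exp).div_const (2 * v)
    refine this.congr_deriv ?_
    simp [hdψ_def]; ring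
  have hasdψ : ∀ x : ℝ, HasDerivAt dψ (s ^ 2 * ψ x) x := by
    intro x
    have h1 : HasDerivAt (fun t : ℝ => -s * t) (-s) x := by
      simpa using (hasDerivAt_id x).const_mul (-s)
    have h2 : HasDerivAt (fun t : ℝ => s * t) s x := by
      simpa using (hasDerivAt_id x).const_mul s
    have := (((h1.exp.const_mul (u ^ 2 + v ^ 2)).mul_const (-s)).add
      (h2.exp.mul_const s)).div_const (2 * v)
    refine this.congr_deriv ?_
    simp only [hψ_def]
    ring
  set w : ℝ → ℝ := fun t => Real.cosh (s * g t) - ψ t with hw_def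
  set w1 : ℝ → ℝ := fun t => Real.sinh (s * g t) * (s * G1 t) - dψ t with hw1_def
  have key : ∀ x ∈ Ioo a b,
      HasDerivAt w (w1 x) x ∧ ∃ d, HasDerivAt w1 d x ∧ d ≤ s ^ 2 * w x := by
    intro x hx
    have hxI : x ∈ Icc a b := Ioo_subset_Icc_self hx
    have hg' := hgd x hx
    have hG1' := hG1d x hx
    have hsg : HasDerivAt (fun t => s * g t) (s * G1 x) x := hg'.const_mul s
    have hφ : HasDerivAt (fun t => Real.cosh (s * g t)) (Real.sinh (s * g x) * (s * G1 x)) x :=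
      hsg.cosh
    have hw' : HasDerivAt w (w1 x) x := hφ.sub (hasψ x)
    refine ⟨hw', ?_⟩
    have hsinh : HasDerivAt (fun t => Real.sinh (s * g t))
        (Real.cosh (s * g x) * (s * G1 x)) x := hsg.sinh
    have hprod : HasDerivAt (fun t => Real.sinh (s * g t) * (s * G1 t))
        (Real.cosh (s * g x) * (s * G1 x) * (s * G1 x) + Real.sinh (s * g x) * (s * G2 x)) x :=
      hsinh.mul (hG1'.const_mul s)
    refine ⟨_, hprod.sub (hasdψ x), ?_⟩
    -- the differential inequality
    have hsinhpos : 0 < Real.sinh (s * g x) := Real.sinh_pos_iff.2 (mul_pos hs (hpos x hxI))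
    have hcoshpos : 0 < Real.cosh (s * g x) := Real.cosh_pos _
    have hi := hineq x hxI
    rw [coth] at hi
    have hmul := mul_le_mul_of_nonneg_left hi (mul_pos hs hsinhpos).le
    have hRHS : s * Real.sinh (s * g x) *
        (s * (1 - G1 x ^ 2) * (Real.cosh (s * g x) / Real.sinh (s * g x)))
        = s ^ 2 * (1 - G1 x ^ 2) * Real.cosh (s * g x) := by
      field_simp
    rw [hRHS] at hmul
    have : Real.cosh (s * g x) * (s * G1 x) * (s * G1 x) + Real.sinh (s * g x) * (s * G2 x)
        ≤ s ^ 2 * Real.cosh (s * g x) := by nlinarith [hmul]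
    simp only [hw_def]
    linarith
  -- ψ ≥ 1
  have hψ1 : ∀ x : ℝ, 1 ≤ ψ x := by
    intro x
    have h2v : (0:ℝ) < 2 * v := by linarith
    rw [hψ_def]
    rw [le_div_iff₀ h2v, one_mul]
    have hee : Real.exp (-s * x) * Real.exp (s * x) = 1 := by
      rw [← Real.exp_add]; simp
    have hp : (0:ℝ) ≤ (u ^ 2 + v ^ 2) * Real.exp (-s * x) := by positivity
    have hq : (0:ℝ) ≤ Real.exp (s * x) := (Real.exp_pos _).le
    have hsm : Real.sqrt ((u ^ 2 + v ^ 2) * Real.exp (-s * x)) * Real.sqrt (Real.exp (s * x))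
        = Real.sqrt (u ^ 2 + v ^ 2) := by
      rw [← Real.sqrt_mul hp, mul_assoc, hee, mul_one]
    have hv2 : v ≤ Real.sqrt (u ^ 2 + v ^ 2) := by
      have : v = Real.sqrt (v ^ 2) := by rw [Real.sqrt_sq hv.le]
      rw [this]
      exact Real.sqrt_le_sqrt (by nlinarith)
    nlinarith [sq_nonneg (Real.sqrt ((u ^ 2 + v ^ 2) * Real.exp (-s * x)) -
        Real.sqrt (Real.exp (s * x))), Real.sq_sqrt hp, Real.sq_sqrt hq, hsm, hv2]
  have hcoshgHyp : ∀ x : ℝ, Real.cosh (s * gHyp k u v x) = ψ x := by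
    intro x
    have : s * gHyp k u v x = arcosh (ψ x) := by
      rw [gHyp, ← hs_def]
      show s * (1 / s * arcosh (ψ x)) = arcosh (ψ x)
      field_simp
    rw [this, cosh_arcosh (hψ1 x)]
  have hwend1 : w t₁ = 0 := by
    simp only [hw_def]
    rw [← hg1, hcoshgHyp t₁]
    ring
  have hwend2 : w t₂ = 0 := by
    simp only [hw_def]
    rw [← hg2, hcoshgHyp t₂]
    ring
  have hIooIoo : Ioo t₁ t₂ ⊆ Ioo a b := Ioo_subset_Ioo ht₁ ht₂
  -- continuity of w on [t₁, t₂]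
  have hwcont : ContinuousOn w (Icc t₁ t₂) := by
    have hsub : Icc t₁ t₂ ⊆ Icc a b := Icc_subset_Icc ht₁ ht₂
    have hgc : ContinuousOn g (Icc t₁ t₂) := hC2.continuousOn.mono hsub
    have hφc : ContinuousOn (fun t => Real.cosh (s * g t)) (Icc t₁ t₂) :=
      Real.continuous_cosh.comp_continuousOn (continuousOn_const.mul hgc)
    have hψc : ContinuousOn ψ (Icc t₁ t₂) := by
      apply ContinuousOn.div_const
      exact (continuousOn_const.mul (Real.continuous_exp.comp_continuousOn
        (continuousOn_const.mul continuousOn_id))).add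
        (Real.continuous_exp.comp_continuousOn (continuousOn_const.mul continuousOn_id))
    exact hφc.sub hψc
  -- main claim: w ≥ 0 on [t₁, t₂]
  have hwnonneg : ∀ t ∈ Icc t₁ t₂, 0 ≤ w t := by
    obtain ⟨t₀, ht₀mem, ht₀min⟩ :=
      isCompact_Icc.exists_isMinOn (nonempty_Icc.2 ht12.le) hwcont
    rcases le_or_gt 0 (w t₀) with hcase | hneg
    · intro t ht
      exact le_trans hcase (ht₀min ht)
    · exfalso
      have ht₀1 : t₁ < t₀ := by
        rcases lt_or_eq_of_le ht₀mem.1 with h | h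
        · exact h
        · rw [← h, hwend1] at hneg; linarith
      have ht₀2 : t₀ < t₂ := by
        rcases lt_or_eq_of_le ht₀mem.2 with h | h
        · exact h
        · rw [h, hwend2] at hneg; linarith
      have ht₀ab : t₀ ∈ Ioo a b := hIooIoo ⟨ht₀1, ht₀2⟩
      obtain ⟨hwd₀, _⟩ := key t₀ ht₀ab
      have hwcontAt : ContinuousAt w t₀ := hwd₀.continuousAt
      have hev : ∀ᶠ x in nhds t₀, w x < 0 ∧ x ∈ Ioo t₁ t₂ := by
        filter_upwards [hwcontAt.eventually_lt continuousAt_const hneg,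
          isOpen_Ioo.eventually_mem (⟨ht₀1, ht₀2⟩ : t₀ ∈ Ioo t₁ t₂)] with x h1 h2
        exact ⟨h1, h2⟩
      obtain ⟨δ, hδpos, hδ⟩ := Metric.eventually_nhds_iff.1 hev
      set c : ℝ := t₀ - δ / 2 with hc_def
      have hct₀ : c < t₀ := by simp only [hc_def]; linarith
      have hIccδ : ∀ x ∈ Icc c t₀, dist x t₀ < δ := by
        intro x hx
        rw [Real.dist_eq, abs_of_nonpos (by linarith [hx.2])]
        simp only [hc_def] at hx
        linarith [hx.1]
      have hprops : ∀ x ∈ Icc c t₀, w x < 0 ∧ x ∈ Ioo t₁ t₂ := fun x hx => hδ (hIccδ x hx)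
      have hIccab : ∀ x ∈ Icc c t₀, x ∈ Ioo a b := fun x hx => hIooIoo (hprops x hx).2
      -- w1 is strictly antitone on [c, t₀]
      have hw1anti : StrictAntiOn w1 (Icc c t₀) := by
        apply strictAntiOn_of_deriv_neg (convex_Icc c t₀)
        · intro x hx
          obtain ⟨_, d, hd, _⟩ := key x (hIccab x hx)
          exact hd.continuousAt.continuousWithinAt
        · intro x hx
          rw [interior_Icc] at hx
          have hxm : x ∈ Icc c t₀ := Ioo_subset_Icc_self hx
          obtain ⟨_, d, hd, hdle⟩ := key x (hIccab x hxm)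
          rw [hd.deriv]
          have hwx : w x < 0 := (hprops x hxm).1
          nlinarith [pow_pos hs 2]
      have hw1t₀ : w1 t₀ = 0 := by
        have hloc : IsLocalMin w t₀ :=
          ht₀min.isLocalMin (Icc_mem_nhds ht₀1 ht₀2)
        exact hloc.hasDerivAt_eq_zero hwd₀
      -- w is strictly monotone on [c, t₀]
      have hwmono : StrictMonoOn w (Icc c t₀) := by
        apply strictMonoOn_of_deriv_pos (convex_Icc c t₀)
        · intro x hx
          exact (key x (hIccab x hx)).1.continuousAt.continuousWithinAt
        · intro x hx
          rw [interior_Icc] at hx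
          have hxm : x ∈ Icc c t₀ := Ioo_subset_Icc_self hx
          rw [(key x (hIccab x hxm)).1.deriv]
          have := hw1anti hxm ⟨hct₀.le, le_refl t₀⟩ hx.2
          rw [hw1t₀] at this
          exact this
      have hcmem : c ∈ Icc t₁ t₂ := by
        have := (hprops c ⟨le_refl c, hct₀.le⟩).2
        exact Ioo_subset_Icc_self this
      have h1 : w c < w t₀ := hwmono ⟨le_refl c, hct₀.le⟩ ⟨hct₀.le, le_refl t₀⟩ hct₀
      have h2 : w t₀ ≤ w c := ht₀min hcmem
      linarith
  -- conclude
  intro t ht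
  have hwt := hwnonneg t ht
  have htab : t ∈ Icc a b := ⟨le_trans ht₁ ht.1, le_trans ht.2 ht₂⟩
  have h1 : Real.cosh (s * gHyp k u v t) ≤ Real.cosh (s * g t) := by
    rw [hcoshgHyp t]
    simp only [hw_def] at hwt
    linarith
  have h2 := Real.cosh_le_cosh.1 h1
  have hgH : 0 ≤ gHyp k u v t := by
    rw [gHyp, ← hs_def]
    have := arcosh_nonneg (x := ψ t) (hψ1 t)
    rw [hψ_def] at this
    positivity
  have hgt : 0 < g t := hpos t htab
  rw [abs_of_nonneg (by positivity), abs_of_nonneg (by positivity)] at h2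
  exact le_of_mul_le_mul_left h2 hs
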